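/- Let C be a finite cyclic group of order n ≥ 1 and K a field of characteristic zero. If φ₁, φ₂ : C →* Kˣ are two injective monoid homomorphisms into the units of K, then the induced ℚ-algebra homomorphisms MonoidAlgebra ℚ C → K (sending each group element g to φᵢ(g)) have the same kernel. -/

import Mathlib

open Polynomial

/-- The kernel of the lift of an injective homomorphism from a cyclic group of order `n`
is the image of the ideal generated by the `n`-th cyclotomic polynomial. -/
theorem ker_lift_aux
    {C K : Type*} [Group C] [Fintype C] [IsCyclic C] [Field K] [CharZero K]
    (n : ℕ) (hn : 1 ≤ n) (hcard : Fintype.card C = n)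
    (g : C) (hg : ∀ x : C, x ∈ Subgroup.zpowers g)
    (φ : C →* Kˣ) (h : Function.Injective φ) :
    RingHom.ker ((MonoidAlgebra.lift ℚ K C) ((Units.coeHom K).comp φ)) =
      Ideal.map (Polynomial.aeval (MonoidAlgebra.of ℚ C g) : ℚ[X] →ₐ[ℚ] MonoidAlgebra ℚ C)
        (Ideal.span {Polynomial.cyclotomic n ℚ}) := by
  set ψ : ℚ[X] →ₐ[ℚ] MonoidAlgebra ℚ C := Polynomial.aeval (MonoidAlgebra.of ℚ C g)
  set f := (MonoidAlgebra.lift ℚ K C) ((Units.coeHom K).comp φ)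
  have hord : orderOf g = n := by
    rw [orderOf_eq_card_of_forall_mem_zpowers hg, Nat.card_eq_fintype_card, hcard]
  have hfin : IsOfFinOrder g := isOfFinOrder_of_finite g
  -- ψ is surjective
  have hsurj : Function.Surjective ψ := by
    intro x
    induction x using MonoidAlgebra.induction_on with
    | of c =>
      obtain ⟨k, hk⟩ := hfin.mem_powers_iff_mem_zpowers.2 (hg c)
      exact ⟨Polynomial.X ^ k, by simp [ψ, ← hk]⟩
    | add a b ha hb =>
      obtain ⟨p, hp⟩ := ha; obtain ⟨q, hq⟩ := hb
      exact ⟨p + q, by simp [hp, hq]⟩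
    | smul r a ha =>
      obtain ⟨p, hp⟩ := ha
      exact ⟨r • p, by simp [hp]⟩
  -- φ g is a primitive n-th root of unity
  have hζ : IsPrimitiveRoot ((φ g : Kˣ) : K) n := by
    rw [IsPrimitiveRoot.coe_units_iff]
    have : orderOf (φ g) = n := by rw [orderOf_injective φ h, hord]
    exact this ▸ IsPrimitiveRoot.orderOf (φ g)
  -- the composite f ∘ ψ is aeval at (φ g)
  have hcomp : ∀ p : ℚ[X], f (ψ p) = Polynomial.aeval ((φ g : Kˣ) : K) p := by
    intro p
    have : (f.comp ψ : ℚ[X] →ₐ[ℚ] K) = Polynomial.aeval ((φ g : Kˣ) : K) := by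
      apply Polynomial.algHom_ext
      simp [ψ, f]
    exact congrFun (congrArg DFunLike.coe this) p
  -- kernel of f = ψ '' kernel of (f ∘ ψ)
  have hker : RingHom.ker f = Ideal.map ψ (Ideal.comap ψ (RingHom.ker f)) :=
    (Ideal.map_comap_of_surjective (ψ : ℚ[X] →+* MonoidAlgebra ℚ C) hsurj _).symm
  have hcomap : Ideal.comap ψ (RingHom.ker f) = Ideal.span {Polynomial.cyclotomic n ℚ} := by
    have h1 : Ideal.comap ψ (RingHom.ker f)
        = RingHom.ker (Polynomial.aeval ((φ g : Kˣ) : K) : ℚ[X] →ₐ[ℚ] K) := by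
      ext p
      simp only [Ideal.mem_comap, RingHom.mem_ker, AlgHom.toRingHom_eq_coe, RingHom.coe_coe, hcomp p]
    rw [h1, minpoly.ker_aeval_eq_span_minpoly,
      ← Polynomial.cyclotomic_eq_minpoly_rat hζ (by omega)]
  rw [hker, hcomap]

/-- Let `C` be a finite cyclic group of order `n ≥ 1` and `K` a field of
characteristic zero. If `φ₁ φ₂ : C →* Kˣ` are injective, then the induced
`ℚ`-algebra homomorphisms `MonoidAlgebra ℚ C → K` have the same kernel. -/
theorem ker_monoidAlgebra_lift_eq_of_injective
    {C K : Type*} [Group C] [Fintype C] [IsCyclic C] [Field K] [CharZero K]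
    (n : ℕ) (hn : 1 ≤ n) (hcard : Fintype.card C = n)
    (φ₁ φ₂ : C →* Kˣ)
    (h₁ : Function.Injective φ₁) (h₂ : Function.Injective φ₂) :
    RingHom.ker ((MonoidAlgebra.lift ℚ K C) ((Units.coeHom K).comp φ₁)) =
      RingHom.ker ((MonoidAlgebra.lift ℚ K C) ((Units.coeHom K).comp φ₂)) := by
  obtain ⟨g, hg⟩ := IsCyclic.exists_generator (α := C)
  rw [ker_lift_aux n hn hcard g hg φ₁ h₁, ker_lift_aux n hn hcard g hg φ₂ h₂]
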